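/- Define f : ℝ → ℝ by f(0) = 0, f(x) = x² + 1/4 for |x| > 1/2, and f(x) = x² + 1/n − 1/n² for 1/n < |x| ≤ 1/(n−1), n = 3, 4, …. Then f is continuous at 0, satisfies the quadratic growth condition at 0 (f(x) ≥ f(0) + (1/2)x² near 0), but f does not satisfy the Kurdyka–Łojasiewicz property at 0 with any exponent θ ∈ [0,1): for z_k = 1/(k−1), one has 2z_k ∈ ∂f(z_k) and (1−θ)·2z_k / (f(z_k) − f(0))^θ → 0 as k → ∞ for every θ ∈ [0,1). -/

import Mathlib

open Filter Topology
open scoped ENNReal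

noncomputable section

/-- Regular subgradients of `f : ℝ → ℝ`. -/
def RegSubgrad1 (f : ℝ → ℝ) (x : ℝ) : Set ℝ :=
  {v | ∀ ε : ℝ, 0 < ε → ∃ δ : ℝ, 0 < δ ∧ ∀ u : ℝ, |u - x| < δ → u ≠ x →
      f x + v * (u - x) - ε * |u - x| ≤ f u}

/-- Limiting subgradients of `f : ℝ → ℝ`. -/
def LimSubgrad1 (f : ℝ → ℝ) (x : ℝ) : Set ℝ :=
  {v | ∃ xk vk : ℕ → ℝ,
      Tendsto xk atTop (nhds x) ∧ Tendsto vk atTop (nhds v) ∧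
      Tendsto (fun k => f (xk k)) atTop (nhds (f x)) ∧
      ∀ k, vk k ∈ RegSubgrad1 f (xk k)}

/-- The explicit counterexample function. -/
noncomputable def Fc : ℝ → ℝ := fun x => if x = 0 then 0
      else if 1 / 2 < |x| then x ^ 2 + 1 / 4
      else x ^ 2 + 1 / ((⌊|x|⁻¹⌋₊ : ℝ) + 1) - 1 / ((⌊|x|⁻¹⌋₊ : ℝ) + 1) ^ 2

lemma Fc_zero : Fc 0 = 0 := by simp [Fc]

lemma Fc_quad (x : ℝ) : 1 / 2 * x ^ 2 ≤ Fc x := by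
  unfold Fc
  split_ifs with h1 h2
  · subst h1; norm_num
  · nlinarith [sq_nonneg x]
  · have hc : (1:ℝ) ≤ (⌊|x|⁻¹⌋₊ : ℝ) + 1 := by
      have := Nat.cast_nonneg (α := ℝ) ⌊|x|⁻¹⌋₊; linarith
    have hc0 : (0:ℝ) < (⌊|x|⁻¹⌋₊ : ℝ) + 1 := by positivity
    have : 1 / ((⌊|x|⁻¹⌋₊ : ℝ) + 1) ^ 2 ≤ 1 / ((⌊|x|⁻¹⌋₊ : ℝ) + 1) := by
      apply one_div_le_one_div_of_le hc0
      nlinarith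
    nlinarith [sq_nonneg x]

lemma Fc_nonneg (x : ℝ) : 0 ≤ Fc x := le_trans (by positivity) (Fc_quad x)

lemma Fc_le (x : ℝ) : Fc x ≤ x ^ 2 + |x| := by
  unfold Fc
  split_ifs with h1 h2
  · subst h1; simp
  · nlinarith [abs_nonneg x]
  · push_neg at h2
    have hx : 0 < |x| := abs_pos.mpr h1
    have hlt : |x|⁻¹ < (⌊|x|⁻¹⌋₊ : ℝ) + 1 := Nat.lt_floor_add_one _
    have hc0 : (0:ℝ) < (⌊|x|⁻¹⌋₊ : ℝ) + 1 := by positivity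
    have h3 : 1 / ((⌊|x|⁻¹⌋₊ : ℝ) + 1) < |x| := by
      rw [div_lt_iff₀ hc0]
      have := (inv_lt_iff_one_lt_mul₀ hx).mp hlt
      linarith [mul_comm |x| ((⌊|x|⁻¹⌋₊ : ℝ) + 1)]
    have h4 : 0 ≤ 1 / ((⌊|x|⁻¹⌋₊ : ℝ) + 1) ^ 2 := by positivity
    linarith

lemma Fc_zk (k : ℕ) (hk : 3 ≤ k) :
    Fc (1 / ((k : ℝ) - 1)) = (1 / ((k : ℝ) - 1)) ^ 2 + (1 / (k : ℝ) - 1 / (k : ℝ) ^ 2) := by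
  have hk3 : (3:ℝ) ≤ (k:ℝ) := by exact_mod_cast hk
  set z : ℝ := 1 / ((k : ℝ) - 1) with hz
  have hzpos : 0 < z := by rw [hz]; apply div_pos one_pos; linarith
  have hzne : z ≠ 0 := ne_of_gt hzpos
  have habs : |z| = z := abs_of_pos hzpos
  have hzle : z ≤ 1 / 2 := by
    rw [hz, div_le_div_iff₀ (by linarith) (by norm_num)]; linarith
  have hinv : |z|⁻¹ = (k:ℝ) - 1 := by
    rw [habs, hz, one_div, inv_inv]
  have hcast : ((k:ℝ) - 1) = ((k - 1 : ℕ) : ℝ) := by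
    have : (1:ℕ) ≤ k := by omega
    push_cast [this]; ring
  have hfloor : (⌊|z|⁻¹⌋₊ : ℝ) = (k:ℝ) - 1 := by
    rw [hinv, hcast, Nat.floor_natCast]
  unfold Fc
  rw [if_neg hzne, if_neg (by rw [habs]; linarith), hfloor]
  ring_nf

lemma Fc_lb (k : ℕ) (hk : 3 ≤ k) (u : ℝ) (hu : 1 / (k:ℝ) < u) :
    u ^ 2 + (1 / (k : ℝ) - 1 / (k : ℝ) ^ 2) ≤ Fc u := by
  have hk3 : (3:ℝ) ≤ (k:ℝ) := by exact_mod_cast hk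
  have hupos : 0 < u := lt_trans (by positivity) hu
  have hune : u ≠ 0 := ne_of_gt hupos
  have habs : |u| = u := abs_of_pos hupos
  unfold Fc
  rw [if_neg hune]
  split_ifs with h2
  · have h4 : 1 / (k:ℝ) - 1 / (k:ℝ) ^ 2 ≤ 1 / 4 := by
      rw [div_sub_div _ _ (by linarith) (by positivity),
        div_le_div_iff₀ (by positivity) (by norm_num)]
      nlinarith [mul_nonneg (by linarith : (0:ℝ) ≤ (k:ℝ)) (sq_nonneg ((k:ℝ) - 2))]
    linarith
  · push_neg at h2
    rw [habs] at h2 ⊢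
    set m : ℕ := ⌊u⁻¹⌋₊ with hm
    have hinvpos : 0 < u⁻¹ := inv_pos.mpr hupos
    have h2' : (2:ℝ) ≤ u⁻¹ := by
      nlinarith [mul_inv_cancel₀ hune,
        mul_nonneg (inv_nonneg.mpr hupos.le) (by linarith : (0:ℝ) ≤ 1/2 - u)]
    have hm2 : 2 ≤ m := Nat.le_floor (by exact_mod_cast h2')
    have hmlt : m < k := by
      have hfl : (m:ℝ) ≤ u⁻¹ := Nat.floor_le hinvpos.le
      have : u⁻¹ < (k:ℝ) := by
        rw [inv_lt_comm₀ hupos (by linarith), ← one_div]; exact hu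
      exact_mod_cast lt_of_le_of_lt hfl this
    set a : ℝ := 1 / ((m:ℝ) + 1) with ha
    set b : ℝ := 1 / (k:ℝ) with hb
    have hm1pos : (0:ℝ) < (m:ℝ) + 1 := by positivity
    have hm1le : (m:ℝ) + 1 ≤ (k:ℝ) := by
      have : m + 1 ≤ k := hmlt
      exact_mod_cast this
    have hm13 : (3:ℝ) ≤ (m:ℝ) + 1 := by
      have : (2:ℝ) ≤ (m:ℝ) := by exact_mod_cast hm2
      linarith
    have hba : b ≤ a := by
      rw [ha, hb]
      exact one_div_le_one_div_of_le hm1pos hm1le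
    have ha3 : a ≤ 1 / 3 := by
      rw [ha, div_le_div_iff₀ hm1pos (by norm_num)]; linarith
    have hbpos : 0 < b := by rw [hb]; positivity
    have hsq : 1 / ((m:ℝ) + 1) ^ 2 = a ^ 2 := by rw [ha, div_pow, one_pow]
    have hksq : 1 / (k:ℝ) ^ 2 = b ^ 2 := by rw [hb, div_pow, one_pow]
    rw [hsq]
    have key : b - b ^ 2 ≤ a - a ^ 2 := by
      nlinarith [mul_nonneg (by linarith : (0:ℝ) ≤ a - b) (by linarith : (0:ℝ) ≤ 1 - a - b)]
    rw [hksq]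
    linarith

lemma Fc_reg (k : ℕ) (hk : 3 ≤ k) :
    (2 * (1 / ((k : ℝ) - 1))) ∈ RegSubgrad1 Fc (1 / ((k : ℝ) - 1)) := by
  have hk3 : (3:ℝ) ≤ (k:ℝ) := by exact_mod_cast hk
  set z : ℝ := 1 / ((k : ℝ) - 1) with hz
  intro ε hε
  have hδ : 0 < z - 1 / (k:ℝ) := by
    rw [hz, sub_pos]
    apply div_lt_div_of_pos_left one_pos (by linarith) (by linarith)
  refine ⟨z - 1 / (k:ℝ), hδ, fun u hu hne => ?_⟩
  have hu' : 1 / (k:ℝ) < u := by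
    have := (abs_lt.mp hu).1
    linarith
  have hlb := Fc_lb k hk u hu'
  rw [Fc_zk k hk, ← hz]
  nlinarith [sq_nonneg (u - z), mul_nonneg hε.le (abs_nonneg (u - z))]

lemma Fc_mem (k : ℕ) (hk : 3 ≤ k) :
    (2 * (1 / ((k : ℝ) - 1))) ∈ LimSubgrad1 Fc (1 / ((k : ℝ) - 1)) :=
  ⟨fun _ => 1 / ((k : ℝ) - 1), fun _ => 2 * (1 / ((k : ℝ) - 1)),
    tendsto_const_nhds, tendsto_const_nhds, tendsto_const_nhds, fun _ => Fc_reg k hk⟩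

lemma Fc_zk_lb (k : ℕ) (hk : 3 ≤ k) : 1 / (2 * (k:ℝ)) ≤ Fc (1 / ((k : ℝ) - 1)) := by
  have hk3 : (3:ℝ) ≤ (k:ℝ) := by exact_mod_cast hk
  rw [Fc_zk k hk]
  have hb : 1 / (2 * (k:ℝ)) = (1/(k:ℝ))/2 := by field_simp
  have hbb : 1 / (k:ℝ)^2 = (1/(k:ℝ))^2 := by rw [div_pow, one_pow]
  rw [hb, hbb]
  set b : ℝ := 1 / (k:ℝ) with hbdef
  have hbpos : 0 < b := by rw [hbdef]; positivity
  have hb3 : b ≤ 1/3 := by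
    rw [hbdef, div_le_div_iff₀ (by linarith) (by norm_num)]; linarith
  nlinarith [mul_nonneg hbpos.le (by linarith : (0:ℝ) ≤ 1/2 - b), sq_nonneg (1/((k:ℝ)-1))]

lemma Fc_tendsto (θ : ℝ) (hθ0 : 0 ≤ θ) (hθ1 : θ < 1) :
    Tendsto (fun k : ℕ => (1 - θ) * (2 * (1 / ((k : ℝ) - 1))) /
        (Fc (1 / ((k : ℝ) - 1)) - Fc 0) ^ θ) atTop (𝓝 0) := by
  have hnat : Tendsto (fun k : ℕ => (k:ℝ)) atTop atTop := tendsto_natCast_atTop_atTop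
  have t2 : Tendsto (fun k : ℕ => 2 * (k:ℝ)) atTop atTop :=
    hnat.const_mul_atTop two_pos
  have t3 : Tendsto (fun k : ℕ => (2 * (k:ℝ)) ^ (-(1-θ))) atTop (𝓝 0) :=
    (tendsto_rpow_neg_atTop (by linarith)).comp t2
  have tA : Tendsto (fun k : ℕ => (k:ℝ) - 1) atTop atTop :=
    tendsto_atTop_add_const_right _ (-1) hnat
  have t4 : Tendsto (fun k : ℕ => 2 + 2 / ((k:ℝ) - 1)) atTop (𝓝 (2 + 0)) :=
    tendsto_const_nhds.add (Tendsto.div_atTop tendsto_const_nhds tA)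
  rw [add_zero] at t4
  have t4' : Tendsto (fun k : ℕ => (2 * (k:ℝ)) / ((k:ℝ) - 1)) atTop (𝓝 2) := by
    refine Tendsto.congr' ?_ t4
    filter_upwards [eventually_ge_atTop 2] with k hk
    have hk2 : (2:ℝ) ≤ (k:ℝ) := by exact_mod_cast hk
    have hne : (k:ℝ) - 1 ≠ 0 := by linarith
    field_simp
    ring
  have t5 : Tendsto (fun k : ℕ => (2 * (k:ℝ)) ^ (-(1-θ)) * ((2 * (k:ℝ)) / ((k:ℝ) - 1)))
      atTop (𝓝 0) := by simpa using t3.mul t4'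
  have t6 : Tendsto (fun k : ℕ => (2 * (k:ℝ)) ^ θ / ((k:ℝ) - 1)) atTop (𝓝 0) := by
    refine Tendsto.congr' ?_ t5
    filter_upwards [eventually_ge_atTop 2] with k hk
    have hk2 : (2:ℝ) ≤ (k:ℝ) := by exact_mod_cast hk
    have hpos : (0:ℝ) < 2 * (k:ℝ) := by linarith
    rw [show -(1-θ) = θ - 1 by ring, Real.rpow_sub hpos, Real.rpow_one]
    field_simp
  have t7 : Tendsto (fun k : ℕ => 2 * (1-θ) * ((2 * (k:ℝ)) ^ θ / ((k:ℝ) - 1)))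
      atTop (𝓝 0) := by simpa using t6.const_mul (2 * (1-θ))
  refine tendsto_of_tendsto_of_tendsto_of_le_of_le' tendsto_const_nhds t7 ?_ ?_
  · filter_upwards [eventually_ge_atTop 3] with k hk
    have hk3 : (3:ℝ) ≤ (k:ℝ) := by exact_mod_cast hk
    have hz : (0:ℝ) < 1 / ((k:ℝ) - 1) := by apply div_pos one_pos; linarith
    have hQ : (0:ℝ) < 1 / (2 * (k:ℝ)) := by apply div_pos one_pos; linarith
    apply div_nonneg
    · nlinarith
    · exact Real.rpow_nonneg (by rw [Fc_zero]; nlinarith [Fc_zk_lb k hk]) θ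
  · filter_upwards [eventually_ge_atTop 3] with k hk
    have hk3 : (3:ℝ) ≤ (k:ℝ) := by exact_mod_cast hk
    have hlb := Fc_zk_lb k hk
    have hz : (0:ℝ) < 1 / ((k:ℝ) - 1) := by apply div_pos one_pos; linarith
    have hQpos : (0:ℝ) < 1 / (2 * (k:ℝ)) := by apply div_pos one_pos; linarith
    have hP : (1 / (2 * (k:ℝ))) ^ θ ≤ (Fc (1 / ((k:ℝ) - 1)) - Fc 0) ^ θ := by
      rw [Fc_zero, sub_zero]
      exact Real.rpow_le_rpow hQpos.le hlb hθ0
    have hQθpos : (0:ℝ) < (1 / (2 * (k:ℝ))) ^ θ := Real.rpow_pos_of_pos hQpos θ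
    have hN : (0:ℝ) ≤ (1 - θ) * (2 * (1 / ((k:ℝ) - 1))) := by nlinarith
    calc (1 - θ) * (2 * (1 / ((k:ℝ) - 1))) / (Fc (1 / ((k:ℝ) - 1)) - Fc 0) ^ θ
        ≤ (1 - θ) * (2 * (1 / ((k:ℝ) - 1))) / (1 / (2 * (k:ℝ))) ^ θ := by
          apply div_le_div_of_nonneg_left hN hQθpos hP
      _ = 2 * (1-θ) * ((2 * (k:ℝ)) ^ θ / ((k:ℝ) - 1)) := by
          rw [one_div (2 * (k:ℝ)), Real.inv_rpow (by positivity), div_eq_mul_inv, inv_inv]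
          ring

/-- the counterexample function `f` is continuous at `0`, has
quadratic growth at `0`, yet along `z_k = 1/(k-1)` one has `2 z_k ∈ ∂f(z_k)`
with normalized subgradients tending to `0` for every exponent `θ ∈ [0,1)`;
hence `f` fails the KŁ property at `0` with every exponent `θ ∈ [0,1)`. -/
theorem statement_17 (f : ℝ → ℝ)
    (hf : f = fun x => if x = 0 then 0
      else if 1 / 2 < |x| then x ^ 2 + 1 / 4
      else x ^ 2 + 1 / ((⌊|x|⁻¹⌋₊ : ℝ) + 1) - 1 / ((⌊|x|⁻¹⌋₊ : ℝ) + 1) ^ 2) :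
    ContinuousAt f 0 ∧
      (∃ ε : ℝ, 0 < ε ∧ ∀ x : ℝ, |x| ≤ ε → f 0 + 1 / 2 * x ^ 2 ≤ f x) ∧
      (∀ k : ℕ, 3 ≤ k → (2 * (1 / ((k : ℝ) - 1))) ∈ LimSubgrad1 f (1 / ((k : ℝ) - 1))) ∧
      (∀ θ : ℝ, 0 ≤ θ → θ < 1 →
        Tendsto (fun k : ℕ => (1 - θ) * (2 * (1 / ((k : ℝ) - 1))) /
            (f (1 / ((k : ℝ) - 1)) - f 0) ^ θ) atTop (nhds 0)) ∧
      (∀ θ : ℝ, 0 ≤ θ → θ < 1 →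
        ¬ ∃ μ : ℝ, 0 < μ ∧ ∃ ε : ℝ, 0 < ε ∧ ∃ ν : ℝ, 0 < ν ∧
          ∀ x : ℝ, |x| ≤ ε → f 0 < f x → f x < f 0 + ν →
            ENNReal.ofReal ((μ / (1 - θ)) * (f x - f 0) ^ θ) ≤
              EMetric.infEdist 0 (LimSubgrad1 f x)) := by
  have hfc : f = Fc := hf
  subst hfc
  refine ⟨?_, ?_, ?_, Fc_tendsto, ?_⟩
  · -- continuity at 0
    have hg : Tendsto (fun x : ℝ => x ^ 2 + |x|) (𝓝 0) (𝓝 0) := by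
      have := ((continuous_pow 2).add continuous_abs).tendsto (0:ℝ)
      exact (by simpa using this : Tendsto ((fun a : ℝ => a ^ 2) + abs) (𝓝 0) (𝓝 0))
    have := squeeze_zero Fc_nonneg Fc_le hg
    unfold ContinuousAt
    rw [Fc_zero]
    exact this
  · exact ⟨1, one_pos, fun x _ => by rw [Fc_zero, zero_add]; exact Fc_quad x⟩
  · exact fun k hk => Fc_mem k hk
  · -- failure of KŁ
    intro θ hθ0 hθ1
    rintro ⟨μ, hμ, ε, hε, ν, hν, h⟩
    have tA : Tendsto (fun k : ℕ => (k:ℝ) - 1) atTop atTop :=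
      tendsto_atTop_add_const_right _ (-1) tendsto_natCast_atTop_atTop
    have tz : Tendsto (fun k : ℕ => 1 / ((k:ℝ) - 1)) atTop (𝓝 0) :=
      Tendsto.div_atTop tendsto_const_nhds tA
    have E1 := (Fc_tendsto θ hθ0 hθ1).eventually_lt_const hμ
    have E2 := tz.eventually_lt_const hε
    have E3 := tz.eventually_lt_const (by positivity : (0:ℝ) < ν / 2)
    obtain ⟨k, ⟨hk1, hk2, hk3⟩, hk4⟩ :=
      ((E1.and (E2.and E3)).and (eventually_ge_atTop 3)).exists
    have hkk : (3:ℝ) ≤ (k:ℝ) := by exact_mod_cast hk4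
    set z : ℝ := 1 / ((k:ℝ) - 1) with hz
    have hzpos : 0 < z := by rw [hz]; apply div_pos one_pos; linarith
    have habs : |z| = z := abs_of_pos hzpos
    have hz1 : z ≤ 1 := by
      rw [hz, div_le_one (by linarith)]; linarith
    have hFpos : 0 < Fc z := lt_of_lt_of_le (by positivity) (Fc_zk_lb k hk4)
    have hFub : Fc z < ν := by
      have h1 := Fc_le z
      rw [habs] at h1
      nlinarith
    have hle := h z (le_of_lt (by rw [habs]; exact hk2)) (by rw [Fc_zero]; exact hFpos)
      (by rw [Fc_zero, zero_add]; exact hFub)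
    have hmem := Fc_mem k hk4
    rw [← hz] at hmem
    have hinf : EMetric.infEdist 0 (LimSubgrad1 Fc z) ≤ ENNReal.ofReal (2 * z) := by
      have h1 : EMetric.infEdist (0:ℝ) (LimSubgrad1 Fc z) ≤ edist 0 (2 * z) :=
        EMetric.infEdist_le_edist_of_mem hmem
      have h2 : edist (0:ℝ) (2 * z) = ENNReal.ofReal (2 * z) := by
        rw [edist_dist, Real.dist_eq, zero_sub, abs_neg, abs_of_pos (by positivity)]
      rwa [h2] at h1
    have hle2 : μ / (1 - θ) * (Fc z - Fc 0) ^ θ ≤ 2 * z := by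
      have := le_trans hle hinf
      rwa [ENNReal.ofReal_le_ofReal_iff (by positivity)] at this
    set P : ℝ := (Fc z - Fc 0) ^ θ with hP
    have hPpos : 0 < P := by
      rw [hP, Fc_zero, sub_zero]
      exact Real.rpow_pos_of_pos hFpos θ
    rw [div_mul_eq_mul_div, div_le_iff₀ (by linarith)] at hle2
    rw [div_lt_iff₀ hPpos] at hk1
    nlinarith
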